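/- Let $f \in \mathbb{C}[x_1, \dots, x_n, y_1, \dots, y_m]$ be symmetric in the $x$'s and in the $y$'s separately and satisfy the quasi-invariance condition: $T_{q,x_i}(f) = T_{t,y_j}(f)$ on each hyperplane $x_i = y_j$. Define $g = \sum_{i=1}^n \frac{A_i}{1-q}(T_{q,x_i}f - f) + \sum_{j=1}^m \frac{B_j}{1-t}(T_{t,y_j}f - f)$ where $A_i = \prod_{k\ne i}\frac{x_i - t x_k}{x_i - x_k}\prod_{j=1}^m \frac{x_i - q y_j}{x_i - y_j}$ and $B_j = \prod_{i=1}^n \frac{y_j - t x_i}{y_j - x_i}\prod_{l\ne j}\frac{y_j - q y_l}{y_j - y_l}$. Then $g$ is a polynomial (the a priori rational function $g$ has no poles along any of the hyperplanes $x_i = x_k$, $y_j = y_l$, $x_i = y_j$). -/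

import Mathlib

open Finset MvPolynomial Sum

noncomputable section
variable {σ : Type*} [DecidableEq σ]

def substAB (a b : σ) : MvPolynomial σ ℂ →ₐ[ℂ] MvPolynomial σ ℂ :=
  aeval (fun v => if v = b then X a else X v)

lemma substAB_X (a b v : σ) : substAB a b (X v) = if v = b then X a else X v := by
  simp [substAB]

lemma eval_aeval' (g : σ → MvPolynomial σ ℂ) (z : σ → ℂ) (H : MvPolynomial σ ℂ) :
    eval z (aeval g H) = eval (fun v => eval z (g v)) H := by
  have : (eval z).comp ((aeval g : MvPolynomial σ ℂ →ₐ[ℂ] MvPolynomial σ ℂ) :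
      MvPolynomial σ ℂ →+* MvPolynomial σ ℂ) = eval (fun v => eval z (g v)) := by
    apply MvPolynomial.ringHom_ext <;> intros <;> simp
  exact RingHom.congr_fun this H

lemma eval_substAB (a b : σ) (hab : a ≠ b) (z : σ → ℂ) (H : MvPolynomial σ ℂ) :
    eval z (substAB a b H) = eval (Function.update z b (z a)) H := by
  rw [substAB, eval_aeval']
  have : (fun v => eval z (if v = b then X a else X v)) = Function.update z b (z a) := by
    funext v
    by_cases hv : v = b <;> simp [hv, Function.update]
  rw [this]

def ΦAB (b : σ) : MvPolynomial σ ℂ ≃ₐ[ℂ] Polynomial (MvPolynomial {v : σ // v ≠ b} ℂ) :=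
  (renameEquiv ℂ (Equiv.optionSubtypeNe b).symm).trans (optionEquivLeft ℂ {v : σ // v ≠ b})

lemma ΦAB_X_self (b : σ) : ΦAB b (X b) = Polynomial.X := by
  simp [ΦAB, Equiv.optionSubtypeNe_symm_self]

lemma ΦAB_X_ne (b : σ) (a : σ) (hab : a ≠ b) :
    ΦAB b (X a) = Polynomial.C (X ⟨a, hab⟩) := by
  simp [ΦAB, Equiv.optionSubtypeNe_symm_of_ne hab]

lemma ΦAB_C (b : σ) (c : ℂ) : ΦAB b (C c) = Polynomial.C (C c) := by
  simp [ΦAB]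

lemma algEquiv_prime {A B : Type*} [CommRing A] [CommRing B] (e : A ≃+* B) (p : A)
    (h : Prime (e p)) : Prime p := by
  refine ⟨fun h0 => h.ne_zero (by rw [h0, map_zero]), fun hu => h.not_unit (hu.map e), ?_⟩
  intro x y hxy
  have : e p ∣ e x * e y := by rw [← map_mul]; exact map_dvd e hxy
  rcases h.2.2 _ _ this with hd | hd
  · exact Or.inl (by simpa using map_dvd e.symm hd)
  · exact Or.inr (by simpa using map_dvd e.symm hd)

lemma prime_X_sub_X (a b : σ) (hab : a ≠ b) : Prime (X b - X a : MvPolynomial σ ℂ) := by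
  apply algEquiv_prime (ΦAB b).toRingEquiv
  have : (ΦAB b).toRingEquiv (X b - X a) = Polynomial.X - Polynomial.C (X ⟨a, hab⟩) := by
    show ΦAB b (X b - X a) = _
    rw [map_sub, ΦAB_X_self, ΦAB_X_ne b a hab]
  rw [this]
  exact Polynomial.prime_X_sub_C _

lemma dvd_of_subst (a b : σ) (hab : a ≠ b) (H : MvPolynomial σ ℂ)
    (h : substAB a b H = 0) : (X b - X a : MvPolynomial σ ℂ) ∣ H := by
  set a' : {v : σ // v ≠ b} := ⟨a, hab⟩
  have key : ∀ H : MvPolynomial σ ℂ,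
      rename (Subtype.val) (Polynomial.eval (X a') (ΦAB b H)) = substAB a b H := by
    intro H
    have hcomp : ((rename (Subtype.val : {v : σ // v ≠ b} → σ)).toRingHom.comp
        ((Polynomial.evalRingHom (X a')).comp (ΦAB b).toAlgHom.toRingHom))
        = (substAB a b).toRingHom := by
      apply MvPolynomial.ringHom_ext
      · intro r
        simp [ΦAB_C, substAB]
      · intro v
        by_cases hv : v = b
        · subst hv
          simp [ΦAB_X_self, substAB_X, a']
        · simp [ΦAB_X_ne b v hv, substAB_X, hv]
    exact RingHom.congr_fun hcomp H
  have h0 : Polynomial.eval (X a') (ΦAB b H) = 0 := by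
    have hinj : Function.Injective (rename (Subtype.val : {v : σ // v ≠ b} → σ) :
        MvPolynomial {v : σ // v ≠ b} ℂ →ₐ[ℂ] MvPolynomial σ ℂ) :=
      rename_injective _ Subtype.val_injective
    apply hinj
    rw [key, h]; simp
  have hdvd : (Polynomial.X - Polynomial.C (X a')) ∣ ΦAB b H :=
    Polynomial.dvd_iff_isRoot.mpr h0
  have hX : ΦAB b (X b - X a) = Polynomial.X - Polynomial.C (X a') := by
    rw [map_sub, ΦAB_X_self, ΦAB_X_ne b a hab]
  obtain ⟨c, hc⟩ := hdvd
  refine ⟨(ΦAB b).symm c, ?_⟩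
  apply (ΦAB b).injective
  rw [map_mul, hX, AlgEquiv.apply_symm_apply, hc]
end

noncomputable section
namespace Stmt15

variable (n m : ℕ)

abbrev P (n m : ℕ) := MvPolynomial (Fin n ⊕ Fin m) ℂ

def pairsF (N : ℕ) : Finset (Fin N × Fin N) := univ.filter fun p => p.1 < p.2

lemma mem_pairsF {N : ℕ} {p : Fin N × Fin N} : p ∈ pairsF N ↔ p.1 < p.2 := by
  simp [pairsF]

lemma prod_pairs_split {A : Type*} [CommRing A] {N : ℕ} (v : Fin N → A) (i : Fin N) :
    ∏ p ∈ pairsF N, (v p.1 - v p.2) = ((-1)^(i:ℕ) * ∏ k ∈ univ.erase i, (v i - v k)) *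
      ∏ p ∈ (pairsF N).filter (fun p => ¬(p.1 = i ∨ p.2 = i)), (v p.1 - v p.2) := by
  rw [← Finset.prod_filter_mul_prod_filter_not (pairsF N) (fun p => p.1 = i ∨ p.2 = i)]
  congr 1
  have h1 : ∏ p ∈ (pairsF N).filter (fun p => p.1 = i ∨ p.2 = i), (v p.1 - v p.2)
      = ∏ k ∈ univ.erase i, (if k < i then v k - v i else v i - v k) := by
    apply Finset.prod_nbij' (fun p => if p.1 = i then p.2 else p.1)
      (fun k => if k < i then (k, i) else (i, k))
    · intro p hp
      rw [mem_filter, mem_pairsF] at hp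
      obtain ⟨hlt, hor⟩ := hp
      rw [mem_erase]
      rcases hor with h | h
      · rw [if_pos h]
        exact ⟨fun hc => absurd hlt (by rw [h, hc]; exact lt_irrefl i), mem_univ _⟩
      · have hne : p.1 ≠ i := fun hc => absurd hlt (by rw [h, hc]; exact lt_irrefl i)
        rw [if_neg hne]
        exact ⟨hne, mem_univ _⟩
    · intro k hk
      rw [mem_erase] at hk
      rw [mem_filter, mem_pairsF]
      by_cases hki : k < i
      · rw [if_pos hki]; exact ⟨hki, Or.inr rfl⟩
      · have hik : i < k := lt_of_le_of_ne (not_lt.mp hki) (Ne.symm hk.1)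
        rw [if_neg hki]; exact ⟨hik, Or.inl rfl⟩
    · intro p hp
      rw [mem_filter, mem_pairsF] at hp
      obtain ⟨hlt, hor⟩ := hp
      rcases hor with h | h
      · rw [if_pos h]
        have : ¬ p.2 < i := fun hc => absurd (hlt.trans hc) (by rw [h]; exact lt_irrefl i)
        rw [if_neg this]
        exact Prod.ext h.symm rfl
      · have hne : p.1 ≠ i := fun hc => absurd hlt (by rw [h, hc]; exact lt_irrefl i)
        rw [if_neg hne]
        have : p.1 < i := by rw [← h]; exact hlt
        rw [if_pos this]
        exact Prod.ext rfl h.symm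
    · intro k hk
      rw [mem_erase] at hk
      by_cases hki : k < i
      · rw [if_pos hki]
        have : (k, i).1 ≠ i := fun hc => hk.1 hc
        rw [if_neg this]
      · rw [if_neg hki]
        have : (i, k).1 = i := rfl
        rw [if_pos this]
    · intro p hp
      rw [mem_filter, mem_pairsF] at hp
      obtain ⟨hlt, hor⟩ := hp
      rcases hor with h | h
      · rw [if_pos h]
        have : ¬ p.2 < i := fun hc => absurd (hlt.trans hc) (by rw [h]; exact lt_irrefl i)
        rw [if_neg this, ← h]
      · have hne : p.1 ≠ i := fun hc => absurd hlt (by rw [h, hc]; exact lt_irrefl i)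
        rw [if_neg hne, if_pos (show p.1 < i by rw [← h]; exact hlt), ← h]
  rw [h1]
  have h2 : ∀ k ∈ univ.erase i, (if k < i then v k - v i else v i - v k)
      = (if k < i then (-1 : A) else 1) * (v i - v k) := by
    intro k _
    by_cases hki : k < i
    · rw [if_pos hki, if_pos hki]; ring
    · rw [if_neg hki, if_neg hki]; ring
  rw [Finset.prod_congr rfl h2, Finset.prod_mul_distrib]
  congr 1
  rw [Finset.prod_ite, Finset.prod_const, Finset.prod_const, one_pow, mul_one]
  congr 1
  have : (univ.erase i).filter (fun k => k < i) = Finset.Iio i := by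
    ext k
    simp only [mem_filter, mem_erase, mem_univ, true_and, Finset.mem_Iio, and_true]
    exact ⟨fun h => h.2, fun h => ⟨ne_of_lt h, h⟩⟩
  rw [this, Fin.card_Iio]


def SX : Finset ((Fin n ⊕ Fin m) × (Fin n ⊕ Fin m)) :=
  (pairsF n).image (fun p => (inl p.1, inl p.2))
def SY : Finset ((Fin n ⊕ Fin m) × (Fin n ⊕ Fin m)) :=
  (pairsF m).image (fun p => (inr p.1, inr p.2))
def SM : Finset ((Fin n ⊕ Fin m) × (Fin n ⊕ Fin m)) :=
  (univ ×ˢ univ : Finset (Fin n × Fin m)).image (fun p => (inl p.1, inr p.2))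
def SS : Finset ((Fin n ⊕ Fin m) × (Fin n ⊕ Fin m)) := SX n m ∪ SY n m ∪ SM n m

lemma mem_SS_iff {e : (Fin n ⊕ Fin m) × (Fin n ⊕ Fin m)} :
    e ∈ SS n m ↔ (∃ a b : Fin n, a < b ∧ e = (inl a, inl b)) ∨
      (∃ a b : Fin m, a < b ∧ e = (inr a, inr b)) ∨
      (∃ (a : Fin n) (b : Fin m), e = (inl a, inr b)) := by
  simp only [SS, SX, SY, SM, mem_union, mem_image, mem_pairsF, mem_product]
  constructor
  · rintro ((⟨p, hp, rfl⟩ | ⟨p, hp, rfl⟩) | ⟨p, _, rfl⟩)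
    · exact Or.inl ⟨p.1, p.2, hp, rfl⟩
    · exact Or.inr (Or.inl ⟨p.1, p.2, hp, rfl⟩)
    · exact Or.inr (Or.inr ⟨p.1, p.2, rfl⟩)
  · rintro (⟨a, b, hab, rfl⟩ | ⟨a, b, hab, rfl⟩ | ⟨a, b, rfl⟩)
    · exact Or.inl (Or.inl ⟨(a, b), hab, rfl⟩)
    · exact Or.inl (Or.inr ⟨(a, b), hab, rfl⟩)
    · exact Or.inr ⟨(a, b), by simp⟩

lemma SS_ne {e : (Fin n ⊕ Fin m) × (Fin n ⊕ Fin m)} (he : e ∈ SS n m) : e.1 ≠ e.2 := by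
  rw [mem_SS_iff] at he
  rcases he with ⟨a, b, hab, rfl⟩ | ⟨a, b, hab, rfl⟩ | ⟨a, b, rfl⟩ <;> simp
  · exact fun h => absurd (h ▸ hab) (lt_irrefl _)
  · exact fun h => absurd (h ▸ hab) (lt_irrefl _)

lemma SS_pair {e e' : (Fin n ⊕ Fin m) × (Fin n ⊕ Fin m)} (he : e ∈ SS n m)
    (he' : e' ∈ SS n m) : ¬(e.1 = e'.2 ∧ e.2 = e'.1) := by
  rw [mem_SS_iff] at he he'
  rintro ⟨h1, h2⟩
  rcases he with ⟨a, b, hab, rfl⟩ | ⟨a, b, hab, rfl⟩ | ⟨a, b, rfl⟩ <;>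
    rcases he' with ⟨a', b', hab', rfl⟩ | ⟨a', b', hab', rfl⟩ | ⟨a', b', rfl⟩ <;>
    simp only [Prod.fst, Prod.snd] at h1 h2
  · obtain rfl := Sum.inl_injective h1
    obtain rfl := Sum.inl_injective h2
    exact absurd (hab.trans hab') (lt_irrefl _)
  · exact Sum.inl_ne_inr h1
  · exact Sum.inl_ne_inr h1
  · exact Sum.inr_ne_inl h1
  · obtain rfl := Sum.inr_injective h1
    obtain rfl := Sum.inr_injective h2
    exact absurd (hab.trans hab') (lt_irrefl _)
  · exact Sum.inr_ne_inl h2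
  · exact Sum.inr_ne_inl h2
  · exact Sum.inl_ne_inr h1
  · exact Sum.inr_ne_inl h2

def lf (e : (Fin n ⊕ Fin m) × (Fin n ⊕ Fin m)) : P n m := X e.1 - X e.2

def DD : P n m := ∏ e ∈ SS n m, lf n m e

def DDx : P n m := ∏ p ∈ pairsF n, (X (inl p.1) - X (inl p.2))
def DDy : P n m := ∏ p ∈ pairsF m, (X (inr p.1) - X (inr p.2))
def DDxy : P n m := ∏ i : Fin n, ∏ j : Fin m, (X (inl i) - X (inr j))

lemma DD_eq : DD n m = DDx n m * DDy n m * DDxy n m := by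
  have hd1 : Disjoint (SX n m) (SY n m) := by
    rw [Finset.disjoint_left]
    rintro e he he'
    simp only [SX, SY, mem_image] at he he'
    obtain ⟨p, _, rfl⟩ := he
    obtain ⟨p', _, h⟩ := he'
    exact Sum.inr_ne_inl (congrArg Prod.fst h)
  have hd2 : Disjoint (SX n m ∪ SY n m) (SM n m) := by
    rw [Finset.disjoint_left]
    rintro e he he'
    simp only [SX, SY, SM, mem_union, mem_image] at he he'
    obtain ⟨p', _, h⟩ := he'
    rcases he with ⟨p, _, rfl⟩ | ⟨p, _, rfl⟩
    · exact Sum.inr_ne_inl (congrArg Prod.snd h)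
    · exact Sum.inl_ne_inr (congrArg Prod.fst h)
  rw [DD, SS, Finset.prod_union hd2, Finset.prod_union hd1]
  congr 1
  · congr 1
    · rw [SX, Finset.prod_image]
      · rfl
      · intro p _ p' _ h
        have h1 := Sum.inl_injective (congrArg Prod.fst h)
        have h2 := Sum.inl_injective (congrArg Prod.snd h)
        exact Prod.ext h1 h2
    · rw [SY, Finset.prod_image]
      · rfl
      · intro p _ p' _ h
        have h1 := Sum.inr_injective (congrArg Prod.fst h)
        have h2 := Sum.inr_injective (congrArg Prod.snd h)
        exact Prod.ext h1 h2
  · rw [SM, Finset.prod_image, Finset.prod_product]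
    · rfl
    · intro p _ p' _ h
      have h1 := Sum.inl_injective (congrArg Prod.fst h)
      have h2 := Sum.inr_injective (congrArg Prod.snd h)
      exact Prod.ext h1 h2

variable (q t : ℂ)

def numA (i : Fin n) : P n m :=
  (∏ k ∈ univ.erase i, (X (inl i) - C t * X (inl k))) * ∏ j : Fin m, (X (inl i) - C q * X (inr j))
def denomA (i : Fin n) : P n m :=
  (∏ k ∈ univ.erase i, (X (inl i) - X (inl k))) * ∏ j : Fin m, (X (inl i) - X (inr j))
def compA (i : Fin n) : P n m :=
  ((∏ p ∈ (pairsF n).filter (fun p => ¬(p.1 = i ∨ p.2 = i)), (X (inl p.1) - X (inl p.2))) *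
    DDy n m) * ∏ k ∈ univ.erase i, ∏ j : Fin m, (X (inl k) - X (inr j))

def numB (j : Fin m) : P n m :=
  (∏ i : Fin n, (X (inr j) - C t * X (inl i))) * ∏ l ∈ univ.erase j, (X (inr j) - C q * X (inr l))
def denomB (j : Fin m) : P n m :=
  (∏ i : Fin n, (X (inr j) - X (inl i))) * ∏ l ∈ univ.erase j, (X (inr j) - X (inr l))
def compB (j : Fin m) : P n m :=
  (DDx n m * ∏ p ∈ (pairsF m).filter (fun p => ¬(p.1 = j ∨ p.2 = j)), (X (inr p.1) - X (inr p.2))) *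
    ∏ k : Fin n, ∏ l ∈ univ.erase j, (X (inl k) - X (inr l))

lemma PIx (i : Fin n) : DD n m = ((-1 : P n m)^(i:ℕ) * denomA n m i) * compA n m i := by
  rw [DD_eq, DDx, prod_pairs_split (fun k => (X (inl k) : P n m)) i,
    DDxy, ← Finset.mul_prod_erase (univ : Finset (Fin n))
      (fun k => ∏ j : Fin m, (X (inl k) - X (inr j))) (mem_univ i)]
  rw [denomA, compA]
  ring

lemma PIy (j : Fin m) : DD n m =
    (((-1 : P n m)^(j:ℕ) * (-1)^n * denomB n m j) * compB n m j) := by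
  rw [DD_eq, DDy, prod_pairs_split (fun l => (X (inr l) : P n m)) j]
  have hxy : DDxy n m = ((-1 : P n m)^n * ∏ i : Fin n, (X (inr j) - X (inl i))) *
      ∏ k : Fin n, ∏ l ∈ univ.erase j, (X (inl k) - X (inr l)) := by
    rw [DDxy]
    have : ∀ k : Fin n, ∏ l : Fin m, ((X (inl k) : P n m) - X (inr l)) =
        (X (inl k) - X (inr j)) * ∏ l ∈ univ.erase j, (X (inl k) - X (inr l)) := by
      intro k
      rw [Finset.mul_prod_erase (univ : Finset (Fin m))
        (fun l => (X (inl k) : P n m) - X (inr l)) (mem_univ j)]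
    rw [Finset.prod_congr rfl (fun k _ => this k), Finset.prod_mul_distrib]
    congr 1
    have : ∀ k : Fin n, ((X (inl k) : P n m) - X (inr j)) = (-1) * (X (inr j) - X (inl k)) := by
      intro k; ring
    rw [Finset.prod_congr rfl (fun k _ => this k), Finset.prod_mul_distrib, Finset.prod_const,
      Finset.card_univ, Fintype.card_fin]
  rw [hxy, denomB, compB]
  ring

lemma lf_prime {e : (Fin n ⊕ Fin m) × (Fin n ⊕ Fin m)} (h : e.1 ≠ e.2) : Prime (lf n m e) :=
  prime_X_sub_X e.2 e.1 h.symm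

lemma lf_ne_zero {e : (Fin n ⊕ Fin m) × (Fin n ⊕ Fin m)} (h : e.1 ≠ e.2) : lf n m e ≠ 0 :=
  (lf_prime n m h).ne_zero

def DDm (e : (Fin n ⊕ Fin m) × (Fin n ⊕ Fin m)) : P n m := ∏ x ∈ (SS n m).erase e, lf n m x

lemma DD_eq_lf_mul {e} (he : e ∈ SS n m) : DD n m = lf n m e * DDm n m e := by
  rw [DD, DDm, Finset.mul_prod_erase _ _ he]

lemma mem_SS_xx {i k : Fin n} (h : i < k) : ((inl i, inl k) : (Fin n ⊕ Fin m) × (Fin n ⊕ Fin m)) ∈ SS n m :=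
  (mem_SS_iff n m).mpr (Or.inl ⟨i, k, h, rfl⟩)
lemma mem_SS_yy {j l : Fin m} (h : j < l) : ((inr j, inr l) : (Fin n ⊕ Fin m) × (Fin n ⊕ Fin m)) ∈ SS n m :=
  (mem_SS_iff n m).mpr (Or.inr (Or.inl ⟨j, l, h, rfl⟩))
lemma mem_SS_xy (i : Fin n) (j : Fin m) : ((inl i, inr j) : (Fin n ⊕ Fin m) × (Fin n ⊕ Fin m)) ∈ SS n m :=
  (mem_SS_iff n m).mpr (Or.inr (Or.inr ⟨i, j, rfl⟩))

def restXX (i k : Fin n) : P n m :=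
  (∏ k' ∈ (univ.erase i).erase k, (X (inl i) - X (inl k'))) * ∏ j : Fin m, (X (inl i) - X (inr j))
def restYY (j l : Fin m) : P n m :=
  (∏ i : Fin n, (X (inr j) - X (inl i))) * ∏ l' ∈ (univ.erase j).erase l, (X (inr j) - X (inr l'))
def restXM (i : Fin n) (j : Fin m) : P n m :=
  (∏ k ∈ univ.erase i, (X (inl i) - X (inl k))) * ∏ j' ∈ univ.erase j, (X (inl i) - X (inr j'))
def restYM (j : Fin m) (i : Fin n) : P n m :=
  (∏ i' ∈ univ.erase i, (X (inr j) - X (inl i'))) * ∏ l ∈ univ.erase j, (X (inr j) - X (inr l))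

lemma CIxx1 {i k : Fin n} (h : i < k) :
    DDm n m (inl i, inl k) = ((-1 : P n m)^(i:ℕ) * restXX n m i k) * compA n m i := by
  have hlf : lf n m (inl i, inl k) ≠ 0 := lf_ne_zero n m (by simp [Sum.inl.injEq]; exact (ne_of_lt h))
  apply mul_left_cancel₀ hlf
  rw [← DD_eq_lf_mul n m (mem_SS_xx n m h), PIx n m i]
  have : denomA n m i = lf n m (inl i, inl k) * restXX n m i k := by
    rw [denomA, restXX, ← Finset.mul_prod_erase (univ.erase i)
      (fun k' => (X (inl i) : P n m) - X (inl k')) (by rw [mem_erase]; exact ⟨ne_of_gt h, mem_univ k⟩)]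
    rw [lf]
    ring
  rw [this]
  ring

lemma CIxx2 {i k : Fin n} (h : i < k) :
    DDm n m (inl i, inl k) = (-(-1 : P n m)^(k:ℕ) * restXX n m k i) * compA n m k := by
  have hlf : lf n m (inl i, inl k) ≠ 0 := lf_ne_zero n m (by simp [Sum.inl.injEq]; exact (ne_of_lt h))
  apply mul_left_cancel₀ hlf
  rw [← DD_eq_lf_mul n m (mem_SS_xx n m h), PIx n m k]
  have : denomA n m k = (-1) * lf n m (inl i, inl k) * restXX n m k i := by
    rw [denomA, restXX, ← Finset.mul_prod_erase (univ.erase k)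
      (fun k' => (X (inl k) : P n m) - X (inl k')) (by rw [mem_erase]; exact ⟨ne_of_lt h, mem_univ i⟩)]
    rw [lf]
    ring
  rw [this]
  ring

lemma CIyy1 {j l : Fin m} (h : j < l) :
    DDm n m (inr j, inr l) = (((-1 : P n m)^(j:ℕ) * (-1)^n) * restYY n m j l) * compB n m j := by
  have hlf : lf n m (inr j, inr l) ≠ 0 := lf_ne_zero n m (by simp [Sum.inr.injEq]; exact (ne_of_lt h))
  apply mul_left_cancel₀ hlf
  rw [← DD_eq_lf_mul n m (mem_SS_yy n m h), PIy n m j]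
  have : denomB n m j = lf n m (inr j, inr l) * restYY n m j l := by
    rw [denomB, restYY, ← Finset.mul_prod_erase (univ.erase j)
      (fun l' => (X (inr j) : P n m) - X (inr l')) (by rw [mem_erase]; exact ⟨ne_of_gt h, mem_univ l⟩)]
    rw [lf]
    ring
  rw [this]
  ring

lemma CIyy2 {j l : Fin m} (h : j < l) :
    DDm n m (inr j, inr l) = ((-((-1 : P n m)^(l:ℕ) * (-1)^n)) * restYY n m l j) * compB n m l := by
  have hlf : lf n m (inr j, inr l) ≠ 0 := lf_ne_zero n m (by simp [Sum.inr.injEq]; exact (ne_of_lt h))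
  apply mul_left_cancel₀ hlf
  rw [← DD_eq_lf_mul n m (mem_SS_yy n m h), PIy n m l]
  have : denomB n m l = (-1) * lf n m (inr j, inr l) * restYY n m l j := by
    rw [denomB, restYY, ← Finset.mul_prod_erase (univ.erase l)
      (fun l' => (X (inr l) : P n m) - X (inr l')) (by rw [mem_erase]; exact ⟨ne_of_lt h, mem_univ j⟩)]
    rw [lf]
    ring
  rw [this]
  ring

lemma CIxm (i : Fin n) (j : Fin m) :
    DDm n m (inl i, inr j) = ((-1 : P n m)^(i:ℕ) * restXM n m i j) * compA n m i := by
  have hlf : lf n m (inl i, inr j) ≠ 0 := lf_ne_zero n m (by simp)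
  apply mul_left_cancel₀ hlf
  rw [← DD_eq_lf_mul n m (mem_SS_xy n m i j), PIx n m i]
  have : denomA n m i = lf n m (inl i, inr j) * restXM n m i j := by
    rw [denomA, restXM, ← Finset.mul_prod_erase (univ : Finset (Fin m))
      (fun j' => (X (inl i) : P n m) - X (inr j')) (mem_univ j)]
    rw [lf]
    ring
  rw [this]
  ring

lemma CIym (i : Fin n) (j : Fin m) :
    DDm n m (inl i, inr j) = ((-((-1 : P n m)^(j:ℕ) * (-1)^n)) * restYM n m j i) * compB n m j := by
  have hlf : lf n m (inl i, inr j) ≠ 0 := lf_ne_zero n m (by simp)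
  apply mul_left_cancel₀ hlf
  rw [← DD_eq_lf_mul n m (mem_SS_xy n m i j), PIy n m j]
  have : denomB n m j = (-1) * lf n m (inl i, inr j) * restYM n m j i := by
    rw [denomB, restYM, ← Finset.mul_prod_erase (univ : Finset (Fin n))
      (fun i' => (X (inr j) : P n m) - X (inl i')) (mem_univ i)]
    rw [lf]
    ring
  rw [this]
  ring

lemma not_lf_dvd_lf {e e' : (Fin n ⊕ Fin m) × (Fin n ⊕ Fin m)} (he : e ∈ SS n m)
    (he' : e' ∈ SS n m) (hne : e ≠ e') : ¬ (lf n m e ∣ lf n m e') := by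
  intro hdvd
  -- find c in {e'.1, e'.2} not in {e.1, e.2}
  have hc : ∃ c, (c = e'.1 ∨ c = e'.2) ∧ c ≠ e.1 ∧ c ≠ e.2 := by
    by_contra hcon
    push_neg at hcon
    have h1 := hcon e'.1 (Or.inl rfl)
    have h2 := hcon e'.2 (Or.inr rfl)
    have hne' := SS_ne n m he'
    rcases Classical.em (e'.1 = e.1) with ha | ha
    · rcases Classical.em (e'.2 = e.1) with hb | hb
      · exact hne' (ha.trans hb.symm)
      · have hb2 : e'.2 = e.2 := by
          rcases Classical.em (e'.2 = e.2) with h | h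
          · exact h
          · exact absurd (h2 (fun hh => hb hh)) (fun hh => h hh)
        exact hne (Prod.ext ha.symm hb2.symm)
    · have ha2 : e'.1 = e.2 := by
        rcases Classical.em (e'.1 = e.2) with h | h
        · exact h
        · exact absurd (h1 (fun hh => ha hh)) (fun hh => h hh)
      have hb : e'.2 = e.1 := by
        rcases Classical.em (e'.2 = e.1) with h | h
        · exact h
        · have hb2 : e'.2 = e.2 := by
            rcases Classical.em (e'.2 = e.2) with h' | h'
            · exact h'
            · exact absurd (h2 (fun hh => h hh)) (fun hh => h' hh)
          exact absurd (ha2.trans hb2.symm) hne'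
      exact SS_pair n m he' he ⟨ha2, hb⟩
  obtain ⟨c, hc1, hc2, hc3⟩ := hc
  set z : (Fin n ⊕ Fin m) → ℂ := fun v => if v = c then 1 else 0 with hz
  have hze : eval z (lf n m e) = 0 := by
    simp only [lf, map_sub, eval_X, hz]
    rw [if_neg (fun hh => hc2 hh.symm), if_neg (fun hh => hc3 hh.symm)]
    ring
  have hze' : eval z (lf n m e') ≠ 0 := by
    have hne' := SS_ne n m he'
    simp only [lf, map_sub, eval_X, hz]
    rcases hc1 with rfl | rfl
    · rw [if_pos rfl, if_neg (fun hh => hne' hh.symm)]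
      norm_num
    · rw [if_neg (fun hh => hne' hh), if_pos rfl]
      norm_num
  obtain ⟨u, hu⟩ := hdvd
  apply hze'
  rw [hu, map_mul, hze, zero_mul]

lemma prod_lf_dvd (H : P n m) (s : Finset ((Fin n ⊕ Fin m) × (Fin n ⊕ Fin m)))
    (hs : s ⊆ SS n m) (hdvd : ∀ e ∈ s, lf n m e ∣ H) : (∏ e ∈ s, lf n m e) ∣ H := by
  classical
  revert hdvd hs
  induction s using Finset.induction_on with
  | empty => intro _ _; simp
  | @insert e s' hes' ih =>
      intro hs hdvd
      rw [Finset.prod_insert hes']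
      have hmemE : e ∈ SS n m := hs (mem_insert_self _ _)
      have hdvd' : (∏ e' ∈ s', lf n m e') ∣ H :=
        ih ((Finset.subset_insert _ _).trans hs) (fun e' he' => hdvd e' (mem_insert_of_mem he'))
      have hprime : Prime (lf n m e) := lf_prime n m (SS_ne n m hmemE)
      have hrel : IsRelPrime (lf n m e) (∏ e' ∈ s', lf n m e') := by
        rw [hprime.irreducible.isRelPrime_iff_not_dvd]
        intro hd
        obtain ⟨e', he', hd'⟩ := hprime.exists_mem_finset_dvd hd
        exact not_lf_dvd_lf n m hmemE (hs (mem_insert_of_mem he'))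
          (by rintro rfl; exact hes' he') hd'
      exact hrel.mul_dvd (hdvd e (mem_insert_self _ _)) hdvd'

def Tsh (c : ℂ) (a : Fin n ⊕ Fin m) : P n m →ₐ[ℂ] P n m :=
  aeval (fun v => if v = a then C c * X v else X v)

lemma eval_Tsh (c : ℂ) (a : Fin n ⊕ Fin m) (z : Fin n ⊕ Fin m → ℂ) (H : P n m) :
    eval z (Tsh n m c a H) = eval (Function.update z a (c * z a)) H := by
  rw [Tsh, eval_aeval']
  have : (fun v => eval z (if v = a then C c * X v else X v)) = Function.update z a (c * z a) := by
    funext v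
    by_cases hv : v = a <;> simp [hv, Function.update]
  rw [this]

def HH (F : P n m) : P n m :=
  C (1-q)⁻¹ * (∑ i : Fin n, ((-1 : P n m)^(i:ℕ) * numA n m q t i * compA n m i) *
      (Tsh n m q (inl i) F - F)) +
  C (1-t)⁻¹ * (∑ j : Fin m, (((-1 : P n m)^(j:ℕ) * (-1)^n) * numB n m q t j * compB n m j) *
      (Tsh n m t (inr j) F - F))

lemma update_elim_inl (x : Fin n → ℂ) (y : Fin m → ℂ) (i : Fin n) (v : ℂ) :
    Function.update (Sum.elim x y) (inl i) v = Sum.elim (Function.update x i v) y := by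
  funext w
  rcases w with a | b
  · by_cases ha : a = i
    · subst ha; simp
    · simp [Function.update, ha]
  · simp [Function.update]

lemma update_elim_inr (x : Fin n → ℂ) (y : Fin m → ℂ) (j : Fin m) (v : ℂ) :
    Function.update (Sum.elim x y) (inr j) v = Sum.elim x (Function.update y j v) := by
  funext w
  rcases w with a | b
  · simp [Function.update]
  · by_cases hb : b = j
    · subst hb; simp
    · simp [Function.update, hb]

lemma coreX (F : P n m)
    (hsymx : ∀ (σ : Equiv.Perm (Fin n)) (x : Fin n → ℂ) (y : Fin m → ℂ),
      eval (Sum.elim (x ∘ σ) y) F = eval (Sum.elim x y) F)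
    (x : Fin n → ℂ) (y : Fin m → ℂ) (i k : Fin n) (hik : i < k) (hxik : x i = x k)
    (hgen : ∀ e ∈ (SS n m).erase (inl i, inl k), Sum.elim x y e.1 ≠ Sum.elim x y e.2) :
    eval (Sum.elim x y) (HH n m q t F) = 0 := by
  have hikne : i ≠ k := ne_of_lt hik
  set z : Fin n ⊕ Fin m → ℂ := Sum.elim x y with hzdef
  -- genericity consequences
  have hgx : ∀ a b : Fin n, a ≠ b → ¬(a = i ∧ b = k) → ¬(a = k ∧ b = i) → x a ≠ x b := by
    intro a b hab h1 h2 hval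
    rcases lt_or_gt_of_ne hab with h | h
    · refine hgen (inl a, inl b) (mem_erase.mpr ⟨?_, mem_SS_xx n m h⟩) (by simpa [hzdef] using hval)
      intro hc
      exact h1 ⟨Sum.inl_injective (congrArg Prod.fst hc), Sum.inl_injective (congrArg Prod.snd hc)⟩
    · refine hgen (inl b, inl a) (mem_erase.mpr ⟨?_, mem_SS_xx n m h⟩) (by simpa [hzdef] using hval.symm)
      intro hc
      exact h2 ⟨Sum.inl_injective (congrArg Prod.snd hc), Sum.inl_injective (congrArg Prod.fst hc)⟩
  have hgy : ∀ a b : Fin m, a ≠ b → y a ≠ y b := by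
    intro a b hab hval
    rcases lt_or_gt_of_ne hab with h | h
    · refine hgen (inr a, inr b) (mem_erase.mpr ⟨by simp, mem_SS_yy n m h⟩) (by simpa [hzdef] using hval)
    · refine hgen (inr b, inr a) (mem_erase.mpr ⟨by simp, mem_SS_yy n m h⟩) (by simpa [hzdef] using hval.symm)
  have hgxy : ∀ (a : Fin n) (b : Fin m), x a ≠ y b := by
    intro a b hval
    refine hgen (inl a, inr b) (mem_erase.mpr ⟨by simp, mem_SS_xy n m a b⟩) (by simpa [hzdef] using hval)
  -- evaluate
  rw [HH, map_add, map_mul, map_mul, map_sum, map_sum, eval_C, eval_C]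
  -- second sum is zero
  have hDDx0 : eval z (DDx n m) = 0 := by
    rw [DDx, map_prod]
    apply Finset.prod_eq_zero (i := ((i,k) : Fin n × Fin n)) (by rw [mem_pairsF]; exact hik)
    simp [hzdef, sub_eq_zero, hxik]
  have h2 : ∀ j : Fin m, eval z ((((-1 : P n m)^(j:ℕ) * (-1)^n) * numB n m q t j * compB n m j) *
      (Tsh n m t (inr j) F - F)) = 0 := by
    intro j
    have : eval z (compB n m j) = 0 := by
      rw [compB, map_mul, map_mul, hDDx0]
      ring
    rw [map_mul, map_mul, this]
    ring
  rw [Finset.sum_congr rfl (fun j _ => h2 j), Finset.sum_const, smul_zero, mul_zero, add_zero]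
  -- first sum: only i and k survive
  set f : Fin n → ℂ := fun i' => eval z ((((-1 : P n m)^(i':ℕ) * numA n m q t i' * compA n m i') *
      (Tsh n m q (inl i') F - F))) with hfdef
  have hvan : ∀ i' ∈ (univ : Finset (Fin n)), i' ∉ ({i, k} : Finset (Fin n)) → f i' = 0 := by
    intro i' _ hi'
    simp only [Finset.mem_insert, Finset.mem_singleton] at hi'
    push_neg at hi'
    have hc0 : eval z (compA n m i') = 0 := by
      rw [compA, map_mul, map_mul, map_prod]
      have hmem : ((i, k) : Fin n × Fin n) ∈ (pairsF n).filter (fun p => ¬(p.1 = i' ∨ p.2 = i')) := by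
        rw [mem_filter, mem_pairsF]
        refine ⟨hik, ?_⟩
        push_neg
        exact ⟨Ne.symm hi'.1, Ne.symm hi'.2⟩
      rw [Finset.prod_eq_zero hmem (by simp [hzdef, sub_eq_zero, hxik])]
      ring
    rw [hfdef]
    simp only [map_mul, hc0]
    ring
  rw [show (∑ i', f i') = ∑ i' ∈ ({i, k} : Finset (Fin n)), f i' from
    (Finset.sum_subset (Finset.subset_univ _) hvan).symm,
    Finset.sum_pair hikne]
  -- now show f i + f k = 0
  set M := eval z (DDm n m (inl i, inl k)) with hM
  set R1 := eval z (restXX n m i k) with hR1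
  set R2 := eval z (restXX n m k i) with hR2
  have e1 : M = (-1)^(i:ℕ) * R1 * eval z (compA n m i) := by
    rw [hM, CIxx1 n m hik]
    simp [map_mul, hR1]
  have e2 : M = -((-1)^(k:ℕ)) * R2 * eval z (compA n m k) := by
    rw [hM, CIxx2 n m hik]
    simp [map_mul, hR2]
  have hR12 : R1 = R2 := by
    rw [hR1, hR2, restXX, restXX]
    simp only [map_mul, map_prod, map_sub, eval_X]
    rw [Finset.erase_right_comm]
    congr 1
    · apply Finset.prod_congr rfl
      intro k' _
      rw [hzdef]
      simp [hxik]
    · apply Finset.prod_congr rfl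
      intro j _
      rw [hzdef]
      simp [hxik]
  have hR1ne : R1 ≠ 0 := by
    rw [hR1, restXX, map_mul, map_prod, map_prod]
    apply mul_ne_zero
    · rw [Finset.prod_ne_zero_iff]
      intro k' hk'
      rw [mem_erase, mem_erase] at hk'
      obtain ⟨hk'k, hk'i, _⟩ := hk'
      have : x i ≠ x k' := hgx i k' (Ne.symm hk'i) (fun h => hk'k h.2) (fun h => hikne h.1)
      simp [hzdef, sub_eq_zero]
      exact this
    · rw [Finset.prod_ne_zero_iff]
      intro j _
      simp [hzdef, sub_eq_zero]
      exact hgxy i j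
  have hnum : eval z (numA n m q t i) = eval z (numA n m q t k) := by
    rw [numA, numA]
    simp only [map_mul, map_prod, map_sub, eval_X, eval_C]
    rw [← Finset.mul_prod_erase (univ.erase i) _ (mem_erase.mpr ⟨Ne.symm hikne, mem_univ k⟩),
      ← Finset.mul_prod_erase (univ.erase k) _ (mem_erase.mpr ⟨hikne, mem_univ i⟩),
      Finset.erase_right_comm]
    rw [hzdef]
    simp only [Sum.elim_inl, Sum.elim_inr]
    rw [hxik]
  have hdel : eval z (Tsh n m q (inl i) F) = eval z (Tsh n m q (inl k) F) := by
    rw [eval_Tsh, eval_Tsh, hzdef]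
    simp only [Sum.elim_inl]
    rw [update_elim_inl, update_elim_inl]
    have hswap : Function.update x k (q * x k) = (Function.update x i (q * x i)) ∘ (Equiv.swap i k) := by
      funext v
      rcases eq_or_ne v i with rfl | hv
      · rw [Function.comp_apply, Equiv.swap_apply_left, Function.update_of_ne hikne,
          Function.update_of_ne (Ne.symm hikne), hxik]
      · rcases eq_or_ne v k with rfl | hv'
        · rw [Function.comp_apply, Equiv.swap_apply_right, Function.update_self,
            Function.update_self, hxik]
        · rw [Function.comp_apply, Equiv.swap_apply_of_ne_of_ne hv hv',
            Function.update_of_ne hv', Function.update_of_ne hv]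
    rw [hswap, hsymx (Equiv.swap i k) (Function.update x i (q * x i)) y]
  -- final arithmetic
  have hfi : f i = ((-1)^(i:ℕ) * eval z (numA n m q t i) * eval z (compA n m i)) *
      (eval z (Tsh n m q (inl i) F) - eval z F) := by
    rw [hfdef]; simp [map_mul, map_sub]
  have hfk : f k = ((-1)^(k:ℕ) * eval z (numA n m q t k) * eval z (compA n m k)) *
      (eval z (Tsh n m q (inl k) F) - eval z F) := by
    rw [hfdef]; simp [map_mul, map_sub]
  have hzero : f i + f k = 0 := by
    apply mul_left_cancel₀ hR1ne
    rw [← hR12] at e2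
    rw [mul_zero, hfi, hfk, ← hnum, ← hdel]
    linear_combination (eval z (numA n m q t i) * (eval z (Tsh n m q (inl i) F) - eval z F)) * e2 -
      (eval z (numA n m q t i) * (eval z (Tsh n m q (inl i) F) - eval z F)) * e1
  rw [hzero, mul_zero]

lemma coreY (F : P n m)
    (hsymy : ∀ (τ : Equiv.Perm (Fin m)) (x : Fin n → ℂ) (y : Fin m → ℂ),
      eval (Sum.elim x (y ∘ τ)) F = eval (Sum.elim x y) F)
    (x : Fin n → ℂ) (y : Fin m → ℂ) (j l : Fin m) (hjl : j < l) (hyjl : y j = y l)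
    (hgen : ∀ e ∈ (SS n m).erase (inr j, inr l), Sum.elim x y e.1 ≠ Sum.elim x y e.2) :
    eval (Sum.elim x y) (HH n m q t F) = 0 := by
  have hjlne : j ≠ l := ne_of_lt hjl
  set z : Fin n ⊕ Fin m → ℂ := Sum.elim x y with hzdef
  have hgy : ∀ a b : Fin m, a ≠ b → ¬(a = j ∧ b = l) → ¬(a = l ∧ b = j) → y a ≠ y b := by
    intro a b hab h1 h2 hval
    rcases lt_or_gt_of_ne hab with h | h
    · refine hgen (inr a, inr b) (mem_erase.mpr ⟨?_, mem_SS_yy n m h⟩) (by simpa [hzdef] using hval)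
      intro hc
      exact h1 ⟨Sum.inr_injective (congrArg Prod.fst hc), Sum.inr_injective (congrArg Prod.snd hc)⟩
    · refine hgen (inr b, inr a) (mem_erase.mpr ⟨?_, mem_SS_yy n m h⟩) (by simpa [hzdef] using hval.symm)
      intro hc
      exact h2 ⟨Sum.inr_injective (congrArg Prod.snd hc), Sum.inr_injective (congrArg Prod.fst hc)⟩
  have hgxy : ∀ (a : Fin n) (b : Fin m), x a ≠ y b := by
    intro a b hval
    refine hgen (inl a, inr b) (mem_erase.mpr ⟨by simp, mem_SS_xy n m a b⟩) (by simpa [hzdef] using hval)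
  rw [HH, map_add, map_mul, map_mul, map_sum, map_sum, eval_C, eval_C]
  have hDDy0 : eval z (DDy n m) = 0 := by
    rw [DDy, map_prod]
    apply Finset.prod_eq_zero (i := ((j,l) : Fin m × Fin m)) (by rw [mem_pairsF]; exact hjl)
    simp [hzdef, sub_eq_zero, hyjl]
  have h1 : ∀ i : Fin n, eval z ((((-1 : P n m)^(i:ℕ) * numA n m q t i * compA n m i)) *
      (Tsh n m q (inl i) F - F)) = 0 := by
    intro i
    have : eval z (compA n m i) = 0 := by
      rw [compA, map_mul, map_mul, hDDy0]
      ring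
    simp only [map_mul]
    rw [this]
    ring
  rw [Finset.sum_congr rfl (fun i _ => h1 i), Finset.sum_const, smul_zero, mul_zero, zero_add]
  set g : Fin m → ℂ := fun j' => eval z (((((-1 : P n m)^(j':ℕ) * (-1)^n) * numB n m q t j' *
      compB n m j')) * (Tsh n m t (inr j') F - F)) with hgdef
  have hvan : ∀ j' ∈ (univ : Finset (Fin m)), j' ∉ ({j, l} : Finset (Fin m)) → g j' = 0 := by
    intro j' _ hj'
    simp only [Finset.mem_insert, Finset.mem_singleton] at hj'
    push_neg at hj'
    have hc0 : eval z (compB n m j') = 0 := by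
      rw [compB, map_mul, map_mul, map_prod]
      have hmem : ((j, l) : Fin m × Fin m) ∈ (pairsF m).filter (fun p => ¬(p.1 = j' ∨ p.2 = j')) := by
        rw [mem_filter, mem_pairsF]
        refine ⟨hjl, ?_⟩
        push_neg
        exact ⟨Ne.symm hj'.1, Ne.symm hj'.2⟩
      rw [Finset.prod_eq_zero hmem (by simp [hzdef, sub_eq_zero, hyjl])]
      ring
    rw [hgdef]
    simp only [map_mul, hc0]
    ring
  rw [show (∑ j', g j') = ∑ j' ∈ ({j, l} : Finset (Fin m)), g j' from
    (Finset.sum_subset (Finset.subset_univ _) hvan).symm,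
    Finset.sum_pair hjlne]
  set M := eval z (DDm n m (inr j, inr l)) with hM
  set R1 := eval z (restYY n m j l) with hR1
  set R2 := eval z (restYY n m l j) with hR2
  have e1 : M = ((-1)^(j:ℕ) * (-1)^n) * R1 * eval z (compB n m j) := by
    rw [hM, CIyy1 n m hjl]
    simp [map_mul, hR1]
  have e2 : M = -((-1)^(l:ℕ) * (-1)^n) * R2 * eval z (compB n m l) := by
    rw [hM, CIyy2 n m hjl]
    simp [map_mul, hR2]
  have hR12 : R1 = R2 := by
    rw [hR1, hR2, restYY, restYY]
    simp only [map_mul, map_prod, map_sub, eval_X]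
    rw [Finset.erase_right_comm]
    congr 1
    · apply Finset.prod_congr rfl
      intro i _
      rw [hzdef]
      simp [hyjl]
    · apply Finset.prod_congr rfl
      intro l' _
      rw [hzdef]
      simp [hyjl]
  have hR1ne : R1 ≠ 0 := by
    rw [hR1, restYY, map_mul, map_prod, map_prod]
    apply mul_ne_zero
    · rw [Finset.prod_ne_zero_iff]
      intro i _
      simp [hzdef, sub_eq_zero]
      exact (hgxy i j).symm
    · rw [Finset.prod_ne_zero_iff]
      intro l' hl'
      rw [mem_erase, mem_erase] at hl'
      obtain ⟨hl'l, hl'j, _⟩ := hl'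
      have : y j ≠ y l' := hgy j l' (Ne.symm hl'j) (fun h => hl'l h.2) (fun h => hjlne h.1)
      simp [hzdef, sub_eq_zero]
      exact this
  have hnum : eval z (numB n m q t j) = eval z (numB n m q t l) := by
    rw [numB, numB]
    simp only [map_mul, map_prod, map_sub, eval_X, eval_C]
    rw [← Finset.mul_prod_erase (univ.erase j) _ (mem_erase.mpr ⟨Ne.symm hjlne, mem_univ l⟩),
      ← Finset.mul_prod_erase (univ.erase l) _ (mem_erase.mpr ⟨hjlne, mem_univ j⟩),
      Finset.erase_right_comm]
    rw [hzdef]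
    simp only [Sum.elim_inl, Sum.elim_inr]
    rw [hyjl]
  have hdel : eval z (Tsh n m t (inr j) F) = eval z (Tsh n m t (inr l) F) := by
    rw [eval_Tsh, eval_Tsh, hzdef]
    simp only [Sum.elim_inr]
    rw [update_elim_inr, update_elim_inr]
    have hswap : Function.update y l (t * y l) = (Function.update y j (t * y j)) ∘ (Equiv.swap j l) := by
      funext v
      rcases eq_or_ne v j with rfl | hv
      · rw [Function.comp_apply, Equiv.swap_apply_left, Function.update_of_ne hjlne,
          Function.update_of_ne (Ne.symm hjlne), hyjl]
      · rcases eq_or_ne v l with rfl | hv'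
        · rw [Function.comp_apply, Equiv.swap_apply_right, Function.update_self,
            Function.update_self, hyjl]
        · rw [Function.comp_apply, Equiv.swap_apply_of_ne_of_ne hv hv',
            Function.update_of_ne hv', Function.update_of_ne hv]
    rw [hswap, hsymy (Equiv.swap j l) x (Function.update y j (t * y j))]
  have hgj : g j = (((-1)^(j:ℕ) * (-1)^n) * eval z (numB n m q t j) * eval z (compB n m j)) *
      (eval z (Tsh n m t (inr j) F) - eval z F) := by
    rw [hgdef]; simp [map_mul, map_sub]
  have hgl : g l = (((-1)^(l:ℕ) * (-1)^n) * eval z (numB n m q t l) * eval z (compB n m l)) *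
      (eval z (Tsh n m t (inr l) F) - eval z F) := by
    rw [hgdef]; simp [map_mul, map_sub]
  have hzero : g j + g l = 0 := by
    apply mul_left_cancel₀ hR1ne
    rw [← hR12] at e2
    rw [mul_zero, hgj, hgl, ← hnum, ← hdel]
    linear_combination (eval z (numB n m q t j) * (eval z (Tsh n m t (inr j) F) - eval z F)) * e2 -
      (eval z (numB n m q t j) * (eval z (Tsh n m t (inr j) F) - eval z F)) * e1
  rw [hzero, mul_zero]

lemma coreM (hq : q ≠ 1) (ht : t ≠ 1) (F : P n m)
    (hquasi : ∀ (x : Fin n → ℂ) (y : Fin m → ℂ) (i : Fin n) (j : Fin m),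
      x i = y j →
      eval (Sum.elim (Function.update x i (q * x i)) y) F =
        eval (Sum.elim x (Function.update y j (t * y j))) F)
    (x : Fin n → ℂ) (y : Fin m → ℂ) (i : Fin n) (j : Fin m) (hxij : x i = y j)
    (hgen : ∀ e ∈ (SS n m).erase (inl i, inr j), Sum.elim x y e.1 ≠ Sum.elim x y e.2) :
    eval (Sum.elim x y) (HH n m q t F) = 0 := by
  set z : Fin n ⊕ Fin m → ℂ := Sum.elim x y with hzdef
  have hgx : ∀ a b : Fin n, a ≠ b → x a ≠ x b := by
    intro a b hab hval
    rcases lt_or_gt_of_ne hab with h | h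
    · exact hgen (inl a, inl b) (mem_erase.mpr ⟨by simp, mem_SS_xx n m h⟩) (by simpa [hzdef] using hval)
    · exact hgen (inl b, inl a) (mem_erase.mpr ⟨by simp, mem_SS_xx n m h⟩) (by simpa [hzdef] using hval.symm)
  have hgy : ∀ a b : Fin m, a ≠ b → y a ≠ y b := by
    intro a b hab hval
    rcases lt_or_gt_of_ne hab with h | h
    · exact hgen (inr a, inr b) (mem_erase.mpr ⟨by simp, mem_SS_yy n m h⟩) (by simpa [hzdef] using hval)
    · exact hgen (inr b, inr a) (mem_erase.mpr ⟨by simp, mem_SS_yy n m h⟩) (by simpa [hzdef] using hval.symm)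
  have hgxy : ∀ (a : Fin n) (b : Fin m), ¬(a = i ∧ b = j) → x a ≠ y b := by
    intro a b hab hval
    refine hgen (inl a, inr b) (mem_erase.mpr ⟨?_, mem_SS_xy n m a b⟩) (by simpa [hzdef] using hval)
    intro hc
    exact hab ⟨Sum.inl_injective (congrArg Prod.fst hc), Sum.inr_injective (congrArg Prod.snd hc)⟩
  rw [HH, map_add, map_mul, map_mul, map_sum, map_sum, eval_C, eval_C]
  set f : Fin n → ℂ := fun i' => eval z ((((-1 : P n m)^(i':ℕ) * numA n m q t i' * compA n m i')) *
      (Tsh n m q (inl i') F - F)) with hfdef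
  set g : Fin m → ℂ := fun j' => eval z (((((-1 : P n m)^(j':ℕ) * (-1)^n) * numB n m q t j' *
      compB n m j')) * (Tsh n m t (inr j') F - F)) with hgdef
  have hvanf : ∀ i' ∈ (univ : Finset (Fin n)), i' ≠ i → f i' = 0 := by
    intro i' _ hi'
    have hc0 : eval z (compA n m i') = 0 := by
      rw [compA, map_mul, map_prod]
      have hz1 : ∏ j'' : Fin m, eval z ((X (inl i) : P n m) - X (inr j'')) = 0 := by
        apply Finset.prod_eq_zero (mem_univ j)
        simp [hzdef, sub_eq_zero, hxij]
      rw [Finset.prod_eq_zero (mem_erase.mpr ⟨Ne.symm hi', mem_univ i⟩)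
        (by rw [map_prod]; exact hz1)]
      ring
    rw [hfdef]
    simp only [map_mul, hc0]
    ring
  have hvang : ∀ j' ∈ (univ : Finset (Fin m)), j' ≠ j → g j' = 0 := by
    intro j' _ hj'
    have hc0 : eval z (compB n m j') = 0 := by
      rw [compB, map_mul, map_prod]
      have hz1 : ∏ l ∈ univ.erase j', eval z ((X (inl i) : P n m) - X (inr l)) = 0 := by
        apply Finset.prod_eq_zero (mem_erase.mpr ⟨Ne.symm hj', mem_univ j⟩)
        simp [hzdef, sub_eq_zero, hxij]
      rw [Finset.prod_eq_zero (mem_univ i) (by rw [map_prod]; exact hz1)]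
      ring
    rw [hgdef]
    simp only [map_mul, hc0]
    ring
  rw [Finset.sum_eq_single_of_mem i (mem_univ i) hvanf,
    Finset.sum_eq_single_of_mem j (mem_univ j) hvang]
  set M := eval z (DDm n m (inl i, inr j)) with hM
  set RA := eval z (restXM n m i j) with hRA
  set RB := eval z (restYM n m j i) with hRB
  have e1 : M = (-1)^(i:ℕ) * RA * eval z (compA n m i) := by
    rw [hM, CIxm n m i j]
    simp [map_mul, hRA]
  have e2 : M = -((-1)^(j:ℕ) * (-1)^n) * RB * eval z (compB n m j) := by
    rw [hM, CIym n m i j]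
    simp [map_mul, hRB]
  have hRAB : RA = RB := by
    rw [hRA, hRB, restXM, restYM]
    simp only [map_mul, map_prod, map_sub, eval_X]
    rw [hzdef]
    simp only [Sum.elim_inl, Sum.elim_inr]
    rw [hxij]
  have hRAne : RA ≠ 0 := by
    rw [hRA, restXM, map_mul, map_prod, map_prod]
    apply mul_ne_zero
    · rw [Finset.prod_ne_zero_iff]
      intro k hk
      rw [mem_erase] at hk
      simp [hzdef, sub_eq_zero]
      exact hgx i k (Ne.symm hk.1)
    · rw [Finset.prod_ne_zero_iff]
      intro j' hj'
      rw [mem_erase] at hj'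
      simp [hzdef, sub_eq_zero]
      exact hgxy i j' (fun h => hj'.1 h.2)
  -- numerator relation : (1-t) * numA_i = (1-q) * numB_j at z
  have hnum : (1-t) * eval z (numA n m q t i) = (1-q) * eval z (numB n m q t j) := by
    rw [numA, numB]
    simp only [map_mul, map_prod, map_sub, eval_X, eval_C]
    rw [← Finset.mul_prod_erase (univ : Finset (Fin m)) _ (mem_univ j),
      ← Finset.mul_prod_erase (univ : Finset (Fin n)) _ (mem_univ i)]
    rw [hzdef]
    simp only [Sum.elim_inl, Sum.elim_inr]
    rw [hxij]
    ring
  have hdel : eval z (Tsh n m q (inl i) F) = eval z (Tsh n m t (inr j) F) := by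
    rw [eval_Tsh, eval_Tsh, hzdef]
    simp only [Sum.elim_inl, Sum.elim_inr]
    rw [update_elim_inl, update_elim_inr]
    exact hquasi x y i j hxij
  have hfi : f i = ((-1)^(i:ℕ) * eval z (numA n m q t i) * eval z (compA n m i)) *
      (eval z (Tsh n m q (inl i) F) - eval z F) := by
    rw [hfdef]; simp [map_mul, map_sub]
  have hgj : g j = (((-1)^(j:ℕ) * (-1)^n) * eval z (numB n m q t j) * eval z (compB n m j)) *
      (eval z (Tsh n m t (inr j) F) - eval z F) := by
    rw [hgdef]; simp [map_mul, map_sub]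
  have h1q : (1 : ℂ) - q ≠ 0 := sub_ne_zero_of_ne (Ne.symm hq)
  have h1t : (1 : ℂ) - t ≠ 0 := sub_ne_zero_of_ne (Ne.symm ht)
  have key : (1-t) * f i + (1-q) * g j = 0 := by
    apply mul_left_cancel₀ hRAne
    rw [← hRAB] at e2
    rw [mul_zero, hfi, hgj, ← hdel]
    linear_combination (-((1-t) * eval z (numA n m q t i) *
        (eval z (Tsh n m q (inl i) F) - eval z F))) * e1 +
      ((1-q) * eval z (numB n m q t j) * (eval z (Tsh n m q (inl i) F) - eval z F)) * e2 +
      ((eval z (Tsh n m q (inl i) F) - eval z F) * M) * hnum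
  have : (1-q)⁻¹ * f i + (1-t)⁻¹ * g j =
      ((1-q)*(1-t))⁻¹ * ((1-t) * f i + (1-q) * g j) := by
    field_simp
  rw [this, key, mul_zero]

lemma elim_comp (z : Fin n ⊕ Fin m → ℂ) : Sum.elim (z ∘ inl) (z ∘ inr) = z := by
  funext v; rcases v with a | b <;> rfl

lemma DD_dvd_HH (hq : q ≠ 1) (ht : t ≠ 1) (F : P n m)
    (hsymx : ∀ (σ : Equiv.Perm (Fin n)) (x : Fin n → ℂ) (y : Fin m → ℂ),
      eval (Sum.elim (x ∘ σ) y) F = eval (Sum.elim x y) F)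
    (hsymy : ∀ (τ : Equiv.Perm (Fin m)) (x : Fin n → ℂ) (y : Fin m → ℂ),
      eval (Sum.elim x (y ∘ τ)) F = eval (Sum.elim x y) F)
    (hquasi : ∀ (x : Fin n → ℂ) (y : Fin m → ℂ) (i : Fin n) (j : Fin m),
      x i = y j →
      eval (Sum.elim (Function.update x i (q * x i)) y) F =
        eval (Sum.elim x (Function.update y j (t * y j))) F) :
    DD n m ∣ HH n m q t F := by
  rw [DD]
  apply prod_lf_dvd n m _ (SS n m) (subset_refl _)
  intro e he
  have hne : e.1 ≠ e.2 := SS_ne n m he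
  rw [lf]
  apply dvd_of_subst e.2 e.1 hne.symm
  -- W ≠ 0
  set W := substAB e.2 e.1 (DDm n m e) with hWdef
  have hW : W ≠ 0 := by
    rw [hWdef, DDm, map_prod]
    rw [Finset.prod_ne_zero_iff]
    intro e' he'
    rw [mem_erase] at he'
    obtain ⟨hee', he'S⟩ := he'
    have hne' : e'.1 ≠ e'.2 := SS_ne n m he'S
    rw [lf, map_sub, substAB_X, substAB_X]
    have goal_ne : (if e'.1 = e.1 then e.2 else e'.1) ≠ (if e'.2 = e.1 then e.2 else e'.2) := by
      by_cases h1 : e'.1 = e.1 <;> by_cases h2 : e'.2 = e.1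
      · exact absurd (h1.trans h2.symm) hne'
      · rw [if_pos h1, if_neg h2]
        intro hc
        exact hee' (Prod.ext h1 hc.symm)
      · rw [if_neg h1, if_pos h2]
        intro hc
        exact SS_pair n m he'S he ⟨hc, h2⟩
      · rw [if_neg h1, if_neg h2]
        exact hne'
    have hnz := lf_ne_zero n m (e := ((if e'.1 = e.1 then e.2 else e'.1),
      (if e'.2 = e.1 then e.2 else e'.2))) goal_ne
    rw [lf] at hnz
    simpa [apply_ite (X (R := ℂ) (σ := Fin n ⊕ Fin m))] using hnz
  have hmul : substAB e.2 e.1 (HH n m q t F) * W = 0 := by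
    apply MvPolynomial.funext (q := 0)
    intro z
    rw [map_mul, map_zero, hWdef, eval_substAB _ _ hne.symm, eval_substAB _ _ hne.symm]
    set z' := Function.update z e.1 (z e.2) with hz'
    have hz'e : z' e.1 = z' e.2 := by
      rw [hz', Function.update_self, Function.update_of_ne hne.symm]
    by_cases hD : eval z' (DDm n m e) = 0
    · rw [hD, mul_zero]
    · have hgen : ∀ e'' ∈ (SS n m).erase e, z' e''.1 ≠ z' e''.2 := by
        intro e'' he'' hval
        apply hD
        rw [DDm, map_prod]
        refine Finset.prod_eq_zero he'' ?_
        rw [lf, map_sub, eval_X, eval_X, sub_eq_zero]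
        exact hval
      have hgen' : ∀ e'' ∈ (SS n m).erase e,
          Sum.elim (z' ∘ inl) (z' ∘ inr) e''.1 ≠ Sum.elim (z' ∘ inl) (z' ∘ inr) e''.2 := by
        rw [elim_comp n m z']
        exact hgen
      have h0 : eval z' (HH n m q t F) = 0 := by
        rcases (mem_SS_iff n m).mp he with ⟨a, b, hab, rfl⟩ | ⟨a, b, hab, rfl⟩ | ⟨a, b, rfl⟩
        · have := coreX n m q t F hsymx (z' ∘ inl) (z' ∘ inr) a b hab hz'e hgen'
          rwa [elim_comp n m z'] at this
        · have := coreY n m q t F hsymy (z' ∘ inl) (z' ∘ inr) a b hab hz'e hgen'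
          rwa [elim_comp n m z'] at this
        · have := coreM n m q t hq ht F hquasi (z' ∘ inl) (z' ∘ inr) a b hz'e hgen'
          rwa [elim_comp n m z'] at this
      rw [h0, zero_mul]
  rcases mul_eq_zero.mp hmul with h | h
  · exact h
  · exact absurd h hW

lemma aux_term (u s N D ca d : ℂ) (hD : D ≠ 0) :
    u * (s * N * ca * d) = (s * D * ca) * (N / D * u * d) := by
  field_simp

lemma eval_DD_good_ne (x : Fin n → ℂ) (y : Fin m → ℂ) (hx : Function.Injective x)
    (hy : Function.Injective y) (hxy : ∀ i j, x i ≠ y j) :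
    eval (Sum.elim x y) (DD n m) ≠ 0 := by
  rw [DD, map_prod, Finset.prod_ne_zero_iff]
  intro e he
  rw [lf, map_sub, eval_X, eval_X, sub_ne_zero]
  rcases (mem_SS_iff n m).mp he with ⟨a, b, hab, rfl⟩ | ⟨a, b, hab, rfl⟩ | ⟨a, b, rfl⟩
  · simpa using fun h => (ne_of_lt hab) (hx h)
  · simpa using fun h => (ne_of_lt hab) (hy h)
  · simpa using hxy a b

lemma eval_HH_good (F : P n m) (x : Fin n → ℂ) (y : Fin m → ℂ)
    (hx : Function.Injective x) (hy : Function.Injective y) (hxy : ∀ i j, x i ≠ y j) :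
    eval (Sum.elim x y) (HH n m q t F) = eval (Sum.elim x y) (DD n m) *
      (∑ i, ((∏ k ∈ Finset.univ.erase i, (x i - t * x k) / (x i - x k)) *
          ∏ j, (x i - q * y j) / (x i - y j)) / (1 - q) *
          (eval (Sum.elim (Function.update x i (q * x i)) y) F - eval (Sum.elim x y) F) +
       ∑ j, ((∏ i, (y j - t * x i) / (y j - x i)) *
          ∏ l ∈ Finset.univ.erase j, (y j - q * y l) / (y j - y l)) / (1 - t) *
          (eval (Sum.elim x (Function.update y j (t * y j))) F - eval (Sum.elim x y) F)) := by
  rw [HH, map_add, map_mul, map_mul, map_sum, map_sum, eval_C, eval_C, mul_add,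
    Finset.mul_sum, Finset.mul_sum, Finset.mul_sum, Finset.mul_sum]
  congr 1
  · apply Finset.sum_congr rfl
    intro i _
    -- abbreviations
    set na := ∏ k ∈ Finset.univ.erase i, (x i - t * x k) with hna
    set nb := ∏ j, (x i - q * y j) with hnb
    set da := ∏ k ∈ Finset.univ.erase i, (x i - x k) with hda
    set db := ∏ j, (x i - y j) with hdb
    have hdane : da ≠ 0 := by
      rw [hda, Finset.prod_ne_zero_iff]
      intro k hk
      rw [mem_erase] at hk
      rw [sub_ne_zero]
      exact fun h => hk.1 (hx h).symm
    have hdbne : db ≠ 0 := by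
      rw [hdb, Finset.prod_ne_zero_iff]
      intro j _
      rw [sub_ne_zero]
      exact hxy i j
    have hNA : eval (Sum.elim x y) (numA n m q t i) = na * nb := by
      rw [numA]
      simp [hna, hnb]
    have hDD : eval (Sum.elim x y) (DD n m) =
        (-1)^(i:ℕ) * (da * db) * eval (Sum.elim x y) (compA n m i) := by
      rw [PIx n m i]
      simp only [map_mul, map_pow, map_neg, map_one]
      rw [show eval (Sum.elim x y) (denomA n m i) = da * db from ?_]
      rw [denomA]
      simp [hda, hdb]
    have hT : eval (Sum.elim x y) (Tsh n m q (inl i) F) =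
        eval (Sum.elim (Function.update x i (q * x i)) y) F := by
      rw [eval_Tsh, Sum.elim_inl, update_elim_inl]
    have hfrac : ((∏ k ∈ Finset.univ.erase i, (x i - t * x k) / (x i - x k)) *
        ∏ j, (x i - q * y j) / (x i - y j)) / (1 - q) =
        (na * nb) / (da * db) * (1 - q)⁻¹ := by
      rw [Finset.prod_div_distrib, Finset.prod_div_distrib, div_mul_div_comm, div_eq_mul_inv]
    rw [hfrac, hDD]
    simp only [map_mul, map_sub, map_pow, map_neg, map_one, hNA, hT]
    rw [show ((-1:ℂ))^(i:ℕ) * (da * db) * eval (Sum.elim x y) (compA n m i) *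
        ((na * nb) / (da * db) * (1 - q)⁻¹ *
          (eval (Sum.elim (Function.update x i (q * x i)) y) F - eval (Sum.elim x y) F)) =
        ((-1:ℂ))^(i:ℕ) * (da * db) * eval (Sum.elim x y) (compA n m i) *
        ((na * nb) / (da * db) * (1 - q)⁻¹ *
          (eval (Sum.elim (Function.update x i (q * x i)) y) F - eval (Sum.elim x y) F)) from rfl]
    have := aux_term ((1-q)⁻¹) ((-1:ℂ)^(i:ℕ)) (na * nb) (da * db)
      (eval (Sum.elim x y) (compA n m i))
      (eval (Sum.elim (Function.update x i (q * x i)) y) F - eval (Sum.elim x y) F)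
      (mul_ne_zero hdane hdbne)
    rw [← this]
  · apply Finset.sum_congr rfl
    intro j _
    set na := ∏ i, (y j - t * x i) with hna
    set nb := ∏ l ∈ Finset.univ.erase j, (y j - q * y l) with hnb
    set da := ∏ i, (y j - x i) with hda
    set db := ∏ l ∈ Finset.univ.erase j, (y j - y l) with hdb
    have hdane : da ≠ 0 := by
      rw [hda, Finset.prod_ne_zero_iff]
      intro i _
      rw [sub_ne_zero]
      exact fun h => hxy i j h.symm
    have hdbne : db ≠ 0 := by
      rw [hdb, Finset.prod_ne_zero_iff]
      intro l hl
      rw [mem_erase] at hl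
      rw [sub_ne_zero]
      exact fun h => hl.1 (hy h).symm
    have hNB : eval (Sum.elim x y) (numB n m q t j) = na * nb := by
      rw [numB]
      simp [hna, hnb]
    have hDD : eval (Sum.elim x y) (DD n m) =
        ((-1)^(j:ℕ) * (-1)^n) * (da * db) * eval (Sum.elim x y) (compB n m j) := by
      rw [PIy n m j]
      simp only [map_mul, map_pow, map_neg, map_one]
      rw [denomB]
      simp only [map_mul, map_prod, map_sub, eval_X, Sum.elim_inl, Sum.elim_inr, hda, hdb]
    have hT : eval (Sum.elim x y) (Tsh n m t (inr j) F) =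
        eval (Sum.elim x (Function.update y j (t * y j))) F := by
      rw [eval_Tsh, Sum.elim_inr, update_elim_inr]
    have hfrac : ((∏ i, (y j - t * x i) / (y j - x i)) *
        ∏ l ∈ Finset.univ.erase j, (y j - q * y l) / (y j - y l)) / (1 - t) =
        (na * nb) / (da * db) * (1 - t)⁻¹ := by
      rw [Finset.prod_div_distrib, Finset.prod_div_distrib, div_mul_div_comm, div_eq_mul_inv]
    rw [hfrac, hDD]
    simp only [map_mul, map_sub, map_pow, map_neg, map_one, hNB, hT]
    have := aux_term ((1-t)⁻¹) ((-1:ℂ)^(j:ℕ) * (-1)^n) (na * nb) (da * db)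
      (eval (Sum.elim x y) (compB n m j))
      (eval (Sum.elim x (Function.update y j (t * y j))) F - eval (Sum.elim x y) F)
      (mul_ne_zero hdane hdbne)
    rw [← this]

end Stmt15

open Stmt15 in
theorem stmt15 (q t : ℂ) (hq : q ≠ 1) (ht : t ≠ 1) (n m : ℕ)
    (F : MvPolynomial (Fin n ⊕ Fin m) ℂ)
    (hsymx : ∀ (σ : Equiv.Perm (Fin n)) (x : Fin n → ℂ) (y : Fin m → ℂ),
      eval (Sum.elim (x ∘ σ) y) F = eval (Sum.elim x y) F)
    (hsymy : ∀ (τ : Equiv.Perm (Fin m)) (x : Fin n → ℂ) (y : Fin m → ℂ),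
      eval (Sum.elim x (y ∘ τ)) F = eval (Sum.elim x y) F)
    (hquasi : ∀ (x : Fin n → ℂ) (y : Fin m → ℂ) (i : Fin n) (j : Fin m),
      x i = y j →
      eval (Sum.elim (Function.update x i (q * x i)) y) F =
        eval (Sum.elim x (Function.update y j (t * y j))) F) :
    ∃ G : MvPolynomial (Fin n ⊕ Fin m) ℂ,
      ∀ (x : Fin n → ℂ) (y : Fin m → ℂ),
        Function.Injective x → Function.Injective y → (∀ i j, x i ≠ y j) →
        eval (Sum.elim x y) G =
          ∑ i, ((∏ k ∈ Finset.univ.erase i, (x i - t * x k) / (x i - x k)) *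
              ∏ j, (x i - q * y j) / (x i - y j)) / (1 - q) *
              (eval (Sum.elim (Function.update x i (q * x i)) y) F -
                eval (Sum.elim x y) F) +
          ∑ j, ((∏ i, (y j - t * x i) / (y j - x i)) *
              ∏ l ∈ Finset.univ.erase j, (y j - q * y l) / (y j - y l)) / (1 - t) *
              (eval (Sum.elim x (Function.update y j (t * y j))) F -
                eval (Sum.elim x y) F) := by
  obtain ⟨G, hG⟩ := DD_dvd_HH n m q t hq ht F hsymx hsymy hquasi
  refine ⟨G, ?_⟩
  intro x y hx hy hxy
  have h1 := eval_HH_good n m q t F x y hx hy hxy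
  rw [hG, map_mul] at h1
  exact mul_left_cancel₀ (eval_DD_good_ne n m x y hx hy hxy) h1
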